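/- Define A_+ = (A*)^{-1}/(q-1) + φ^{-1} R and A_- = (A*)^{-1}/(q-1) - φ (A*)^{-1} L, where φ > 0. Then q A_- A* - A* A_- = I, q A* A_+ - A_+ A* = I, and q A_+ A_- - A_- A_+ = (q^N/(q-1)) I. -/

import Mathlib

open Matrix

set_option maxHeartbeats 1000000
set_option synthInstance.maxHeartbeats 400000

noncomputable section
open scoped Classical

variable (F : Type) [Field F] [Fintype F] (N : ℕ)

/-- The vertex set: all subspaces of the `N`-dimensional vector space over `GF(q)`. -/
abbrev X := Submodule F (Fin N → F)

noncomputable instance : Fintype (X F N) := Fintype.ofFinite _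

/-- The dimension of a subspace. -/
def dimS (y : X F N) : ℕ := Module.finrank F y

/-- `y` covers `z` : `z ⊆ y` and `dim y = dim z + 1`. -/
def Covers (y z : X F N) : Prop := z ≤ y ∧ dimS F N y = dimS F N z + 1

/-- The raising matrix `R`. -/
def R : Matrix (X F N) (X F N) ℂ := fun y z => if Covers F N y z then 1 else 0

/-- The lowering matrix `L = Rᵗ`. -/
def L : Matrix (X F N) (X F N) ℂ := (R F N)ᵀ

/-- The diagonal matrix `A*` with `(y,y)`-entry `q^{-dim y}`. -/
def Astar : Matrix (X F N) (X F N) ℂ :=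
  Matrix.diagonal fun y => (Fintype.card F : ℂ) ^ (-(dimS F N y : ℤ))


/-- fibration counting -/
lemma fiber_card {A B : Type} [Finite A] [Finite B] (f : A → B) (c : ℕ)
    (h : ∀ b : B, Nat.card {a : A // f a = b} = c) :
    Nat.card B * c = Nat.card A := by
  classical
  cases nonempty_fintype A
  cases nonempty_fintype B
  rw [Nat.card_eq_fintype_card, Nat.card_eq_fintype_card,
    ← Fintype.card_congr (Equiv.sigmaFiberEquiv f), Fintype.card_sigma]
  have h' : ∀ b : B, Fintype.card {a : A // f a = b} = c := fun b => by
    rw [← Nat.card_eq_fintype_card]; exact h b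
  simp [h', Finset.sum_const, mul_comm]

lemma card_ne_subtype {α : Type} [Fintype α] (a : α) :
    Nat.card {x : α // x ≠ a} = Fintype.card α - 1 := by
  classical
  rw [Nat.card_eq_fintype_card, Fintype.card_subtype,
    Finset.filter_ne' Finset.univ a, Finset.card_erase_of_mem (Finset.mem_univ a),
    Finset.card_univ]

lemma card_units_of_finrank_one {W : Type} [AddCommGroup W] [Module F W] [Finite W]
    (hW : Module.finrank F W = 1) :
    Nat.card {x : W // x ≠ 0} = Fintype.card F - 1 := by
  classical
  cases nonempty_fintype W
  rw [card_ne_subtype, Module.card_eq_pow_finrank (K := F) (V := W), hW, pow_one]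

lemma span_singleton_eq_iff {V : Type} [AddCommGroup V] [Module F V] [FiniteDimensional F V]
    {w : Submodule F V} (hw : Module.finrank F w = 1)
    {v : V} (hv : v ≠ 0) : Submodule.span F {v} = w ↔ v ∈ w := by
  constructor
  · rintro rfl; exact Submodule.mem_span_singleton_self v
  · intro h
    apply Submodule.eq_of_le_of_finrank_le
    · rwa [Submodule.span_le, Set.singleton_subset_iff]
    · rw [hw, finrank_span_singleton hv]

lemma card_lines (V : Type) [AddCommGroup V] [Module F V] [Fintype V] :
    Nat.card {w : Submodule F V // Module.finrank F w = 1} * (Fintype.card F - 1)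
      = Fintype.card F ^ Module.finrank F V - 1 := by
  classical
  haveI : Module.Finite F V := Module.Finite.of_finite
  have key := fiber_card (A := {v : V // v ≠ 0})
    (B := {w : Submodule F V // Module.finrank F w = 1})
    (fun v => ⟨Submodule.span F {v.1}, finrank_span_singleton v.2⟩) (Fintype.card F - 1) ?_
  · rw [key, card_ne_subtype, Module.card_eq_pow_finrank (K := F) (V := V)]
  · intro w
    have e : {a : {v : V // v ≠ 0} //
        (⟨Submodule.span F {a.1}, finrank_span_singleton a.2⟩ :
          {w : Submodule F V // Module.finrank F w = 1}) = w} ≃ {x : ↥w.1 // x ≠ 0} :=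
    { toFun := fun a => ⟨⟨a.1.1, by
        have h := congrArg Subtype.val a.2
        exact h ▸ Submodule.mem_span_singleton_self _⟩, fun hx => a.1.2 (congrArg Subtype.val hx)⟩
      invFun := fun x => ⟨⟨x.1.1, fun h => x.2 (Subtype.ext h)⟩,
        Subtype.ext ((span_singleton_eq_iff F w.2 (fun h => x.2 (Subtype.ext h))).mpr x.1.2)⟩
      left_inv := fun a => by ext; rfl
      right_inv := fun x => by ext; rfl }
    rw [Nat.card_congr e]
    exact card_units_of_finrank_one F w.2

lemma card_hyperplanes (V : Type) [AddCommGroup V] [Module F V] [Fintype V] :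
    Nat.card {w : Submodule F V // Module.finrank F w + 1 = Module.finrank F V}
        * (Fintype.card F - 1)
      = Fintype.card F ^ Module.finrank F V - 1 := by
  classical
  haveI : Module.Finite F V := Module.Finite.of_finite
  haveI : Finite (Module.Dual F V) :=
    Finite.of_injective (fun φ => (φ : V → F)) DFunLike.coe_injective
  have ker_rank : ∀ φ : Module.Dual F V, φ ≠ 0 →
      Module.finrank F (LinearMap.ker φ) + 1 = Module.finrank F V := by
    intro φ hφ
    have h3 := LinearMap.finrank_range_add_finrank_ker φ
    have hr : LinearMap.range φ = ⊤ := by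
      obtain ⟨x, hx⟩ : ∃ x, φ x ≠ 0 := by
        by_contra h; push_neg at h; exact hφ (LinearMap.ext fun x => h x)
      rw [eq_top_iff]
      intro c _
      refine ⟨(c * (φ x)⁻¹) • x, ?_⟩
      rw [LinearMap.map_smul, smul_eq_mul]
      field_simp
    rw [hr, finrank_top, Module.finrank_self] at h3
    omega
  have key := fiber_card (A := {φ : Module.Dual F V // φ ≠ 0})
    (B := {w : Submodule F V // Module.finrank F w + 1 = Module.finrank F V})
    (fun φ => ⟨LinearMap.ker φ.1, ker_rank φ.1 φ.2⟩) (Fintype.card F - 1) ?_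
  · haveI : Fintype (Module.Dual F V) := Fintype.ofFinite _
    rw [key, card_ne_subtype, Module.card_eq_pow_finrank (K := F) (V := Module.Dual F V),
      Subspace.dual_finrank_eq]
  · intro w
    have hker : ∀ (φ : Module.Dual F V), φ ≠ 0 →
        (LinearMap.ker φ = w.1 ↔ φ ∈ w.1.dualAnnihilator) := by
      intro φ hφ
      constructor
      · intro h
        rw [Submodule.mem_dualAnnihilator]
        intro v hv
        rw [← h] at hv
        exact hv
      · intro h
        have hle : w.1 ≤ LinearMap.ker φ := fun x hx =>
          LinearMap.mem_ker.mpr ((Submodule.mem_dualAnnihilator φ).1 h x hx)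
        have := Submodule.eq_of_le_of_finrank_le hle (by
          have := ker_rank φ hφ
          have := w.2
          omega)
        exact this.symm
    have e : {a : {φ : Module.Dual F V // φ ≠ 0} //
        (⟨LinearMap.ker a.1, ker_rank a.1 a.2⟩ :
          {w : Submodule F V // Module.finrank F w + 1 = Module.finrank F V}) = w}
        ≃ {x : ↥(w.1.dualAnnihilator) // x ≠ 0} :=
    { toFun := fun a => ⟨⟨a.1.1, (hker a.1.1 a.1.2).1 (congrArg Subtype.val a.2)⟩,
        fun hx => a.1.2 (congrArg Subtype.val hx)⟩
      invFun := fun x => ⟨⟨x.1.1, fun h => x.2 (Subtype.ext h)⟩,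
        Subtype.ext ((hker x.1.1 (fun h => x.2 (Subtype.ext h))).2 x.1.2)⟩
      left_inv := fun a => by ext; rfl
      right_inv := fun x => by ext; rfl }
    rw [Nat.card_congr e]
    refine card_units_of_finrank_one F (W := ↥(w.1.dualAnnihilator)) ?_
    have h1 : Module.finrank F (V ⧸ w.1) = Module.finrank F ↥(w.1.dualAnnihilator) :=
      LinearEquiv.finrank_eq (Subspace.quotEquivAnnihilator w.1)
    have h2 := Submodule.finrank_quotient_add_finrank w.1
    have h3 := w.2
    omega

lemma finrank_map_mkQ {V : Type} [AddCommGroup V] [Module F V] [FiniteDimensional F V]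
    (y w : Submodule F V) (h : y ≤ w) :
    Module.finrank F (Submodule.map y.mkQ w) + Module.finrank F y = Module.finrank F w := by
  have h1 : Submodule.map y.mkQ w = LinearMap.range (y.mkQ ∘ₗ w.subtype) := by
    rw [LinearMap.range_comp, Submodule.range_subtype]
  have h2 : LinearMap.ker (y.mkQ ∘ₗ w.subtype) = Submodule.comap w.subtype y := by
    rw [LinearMap.ker_comp, Submodule.ker_mkQ]
  have h3 := LinearMap.finrank_range_add_finrank_ker (y.mkQ ∘ₗ w.subtype)
  rw [h2, (Submodule.comapSubtypeEquivOfLe h).finrank_eq] at h3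
  rw [h1]
  exact h3

lemma covers_above_card (y : X F N) :
    Nat.card {w : X F N // Covers F N w y} * (Fintype.card F - 1)
      = Fintype.card F ^ (N - dimS F N y) - 1 := by
  classical
  have hVr : Module.finrank F (Fin N → F) = N := Module.finrank_fin_fun F
  have hquot : Module.finrank F ((Fin N → F) ⧸ (y : Submodule F (Fin N → F)))
      = N - dimS F N y := by
    have h1 := Submodule.finrank_quotient_add_finrank (y : Submodule F (Fin N → F))
    have h2 : dimS F N y ≤ N := by
      have := Submodule.finrank_le (y : Submodule F (Fin N → F))
      rw [hVr] at this
      exact this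
    rw [hVr] at h1
    unfold dimS at *
    omega
  have e : {w : X F N // Covers F N w y}
      ≃ {u : Submodule F ((Fin N → F) ⧸ (y : Submodule F (Fin N → F))) //
          Module.finrank F u = 1} :=
  { toFun := fun w => ⟨Submodule.map y.mkQ w.1, by
      have := finrank_map_mkQ F y w.1 w.2.1
      have hd := w.2.2
      unfold dimS at hd
      omega⟩
    invFun := fun u => ⟨Submodule.comap y.mkQ u.1, by
      have hle : (y : Submodule F (Fin N → F)) ≤ Submodule.comap y.mkQ u.1 := by
        intro x hx
        rw [Submodule.mem_comap]
        have hz : y.mkQ x = 0 := (Submodule.Quotient.mk_eq_zero y).mpr hx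
        rw [hz]
        exact u.1.zero_mem
      have hmc : Submodule.map y.mkQ (Submodule.comap y.mkQ u.1) = u.1 :=
        Submodule.map_comap_eq_of_surjective (Submodule.mkQ_surjective y) u.1
      have := finrank_map_mkQ F y (Submodule.comap y.mkQ u.1) hle
      rw [hmc, u.2] at this
      refine ⟨hle, ?_⟩
      unfold dimS
      omega⟩
    left_inv := fun w => by
      apply Subtype.ext
      show Submodule.comap y.mkQ (Submodule.map y.mkQ w.1) = w.1
      rw [Submodule.comap_map_mkQ, sup_eq_right.mpr w.2.1]
    right_inv := fun u => by
      apply Subtype.ext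
      show Submodule.map y.mkQ (Submodule.comap y.mkQ u.1) = u.1
      exact Submodule.map_comap_eq_of_surjective (Submodule.mkQ_surjective y) u.1 }
  rw [Nat.card_congr e]
  haveI : Fintype ((Fin N → F) ⧸ (y : Submodule F (Fin N → F))) := Fintype.ofFinite _
  have := card_lines F ((Fin N → F) ⧸ (y : Submodule F (Fin N → F)))
  rwa [hquot] at this

lemma covers_below_card (y : X F N) :
    Nat.card {w : X F N // Covers F N y w} * (Fintype.card F - 1)
      = Fintype.card F ^ dimS F N y - 1 := by
  classical
  have e : {w : X F N // Covers F N y w}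
      ≃ {u : Submodule F ↥y // Module.finrank F u + 1 = Module.finrank F ↥y} :=
  { toFun := fun w => ⟨Submodule.comap y.subtype w.1, by
      have h1 : Module.finrank F ↥(Submodule.comap y.subtype w.1) = Module.finrank F ↥(w.1) :=
        (Submodule.comapSubtypeEquivOfLe w.2.1).finrank_eq
      have h2 := w.2.2
      unfold dimS at h2
      omega⟩
    invFun := fun u => ⟨Submodule.map y.subtype u.1, by
      refine ⟨Submodule.map_subtype_le y u.1, ?_⟩
      have h1 : Module.finrank F (Submodule.map y.subtype u.1) = Module.finrank F u.1 :=
        (Submodule.equivMapOfInjective y.subtype (Submodule.injective_subtype y) u.1).finrank_eq.symm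
      have h2 := u.2
      unfold dimS
      omega⟩
    left_inv := fun w => by
      apply Subtype.ext
      show Submodule.map y.subtype (Submodule.comap y.subtype w.1) = w.1
      rw [Submodule.map_comap_subtype, inf_eq_right.mpr w.2.1]
    right_inv := fun u => by
      apply Subtype.ext
      show Submodule.comap y.subtype (Submodule.map y.subtype u.1) = u.1
      rw [Submodule.comap_map_eq, Submodule.ker_subtype, sup_bot_eq] }
  rw [Nat.card_congr e]
  haveI : Fintype ↥y := Fintype.ofFinite _
  have := card_hyperplanes F ↥y
  exact this

lemma covers_off_diag (y z : X F N) (hyz : y ≠ z) :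
    Nat.card {w : X F N // Covers F N w y ∧ Covers F N w z}
      = Nat.card {w : X F N // Covers F N y w ∧ Covers F N z w} := by
  classical
  by_cases hdim : dimS F N y = dimS F N z
  · -- same dimension
    have hne : ¬ ((z : Submodule F (Fin N → F)) ≤ y) := by
      intro hle
      exact hyz (Submodule.eq_of_le_of_finrank_le hle (le_of_eq hdim)).symm
    have hlt : (y : Submodule F (Fin N → F)) < y ⊔ z := by
      rcases lt_or_eq_of_le (le_sup_left : (y : Submodule F (Fin N → F)) ≤ y ⊔ z) with h | h
      · exact h
      · exact absurd (le_sup_right.trans h.ge) hne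
    have hk : dimS F N y < Module.finrank F ↥((y : Submodule F (Fin N → F)) ⊔ z) :=
      Submodule.finrank_lt_finrank_of_lt hlt
    have hsum := Submodule.finrank_sup_add_finrank_inf_eq (y : Submodule F (Fin N → F)) z
    by_cases hs : Module.finrank F ↥((y : Submodule F (Fin N → F)) ⊔ z) = dimS F N y + 1
    · -- both cards are 1
      have hinf : Module.finrank F ↥((y : Submodule F (Fin N → F)) ⊓ z) + 1 = dimS F N y := by
        unfold dimS at *
        omega
      rw [Nat.card_eq_one_iff_unique.2 ⟨?_, ?_⟩, Nat.card_eq_one_iff_unique.2 ⟨?_, ?_⟩]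
      · constructor
        intro a b
        apply Subtype.ext
        have key : ∀ w : {w : X F N // Covers F N y w ∧ Covers F N z w},
            w.1 = (y : Submodule F (Fin N → F)) ⊓ z := by
          intro w
          apply Submodule.eq_of_le_of_finrank_le (le_inf w.2.1.1 w.2.2.1)
          have := w.2.1.2
          unfold dimS at *
          omega
        rw [key a, key b]
      · exact ⟨⟨(y : Submodule F (Fin N → F)) ⊓ z,
          ⟨inf_le_left, by unfold dimS at *; omega⟩,
          ⟨inf_le_right, by unfold dimS at *; omega⟩⟩⟩
      · constructor
        intro a b
        apply Subtype.ext
        have key : ∀ w : {w : X F N // Covers F N w y ∧ Covers F N w z},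
            w.1 = (y : Submodule F (Fin N → F)) ⊔ z := by
          intro w
          refine (Submodule.eq_of_le_of_finrank_le (sup_le w.2.1.1 w.2.2.1) ?_).symm
          have := w.2.1.2
          unfold dimS at *
          omega
        rw [key a, key b]
      · exact ⟨⟨(y : Submodule F (Fin N → F)) ⊔ z,
          ⟨le_sup_left, by unfold dimS at *; omega⟩,
          ⟨le_sup_right, by unfold dimS at *; omega⟩⟩⟩
    · -- both cards are 0
      haveI h1 : IsEmpty {w : X F N // Covers F N w y ∧ Covers F N w z} := by
        constructor
        intro w
        have hle := Submodule.finrank_mono (sup_le w.2.1.1 w.2.2.1)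
        have := w.2.1.2
        unfold dimS at *
        omega
      haveI h2 : IsEmpty {w : X F N // Covers F N y w ∧ Covers F N z w} := by
        constructor
        intro w
        have hle := Submodule.finrank_mono (le_inf w.2.1.1 w.2.2.1)
        have := w.2.1.2
        unfold dimS at *
        omega
      rw [Nat.card_of_isEmpty, Nat.card_of_isEmpty]
  · -- different dimensions: both empty
    haveI h1 : IsEmpty {w : X F N // Covers F N w y ∧ Covers F N w z} := by
      constructor
      intro w
      have h1 := w.2.1.2
      have h2 := w.2.2.2
      omega
    haveI h2 : IsEmpty {w : X F N // Covers F N y w ∧ Covers F N z w} := by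
      constructor
      intro w
      have h1 := w.2.1.2
      have h2 := w.2.2.2
      omega
    rw [Nat.card_of_isEmpty, Nat.card_of_isEmpty]

lemma qne : (Fintype.card F : ℂ) ≠ 0 := Nat.cast_ne_zero.mpr Fintype.card_ne_zero

lemma q1ne : (Fintype.card F : ℂ) - 1 ≠ 0 := by
  have h2 : 2 ≤ Fintype.card F := Fintype.one_lt_card
  intro h
  rw [sub_eq_zero] at h
  have h1 : (Fintype.card F : ℂ) = ((1 : ℕ) : ℂ) := by rw [h]; norm_num
  have := Nat.cast_injective (R := ℂ) h1
  omega

/-- The diagonal matrix with `(y,y)`-entry `q^{dim y}`, i.e. `(A*)⁻¹`. -/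
def DD : Matrix (X F N) (X F N) ℂ :=
  Matrix.diagonal fun y => (Fintype.card F : ℂ) ^ ((dimS F N y : ℤ))

lemma hDA : DD F N * Astar F N = 1 := by
  rw [DD, Astar, Matrix.diagonal_mul_diagonal]
  ext i j
  by_cases h : i = j
  · subst h
    rw [Matrix.diagonal_apply_eq, Matrix.one_apply_eq, ← zpow_add₀ (qne F)]
    simp
  · rw [Matrix.diagonal_apply_ne _ h, Matrix.one_apply_ne h]

lemma hAD : Astar F N * DD F N = 1 := by
  rw [DD, Astar, Matrix.diagonal_mul_diagonal]
  ext i j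
  by_cases h : i = j
  · subst h
    rw [Matrix.diagonal_apply_eq, Matrix.one_apply_eq, ← zpow_add₀ (qne F)]
    simp
  · rw [Matrix.diagonal_apply_ne _ h, Matrix.one_apply_ne h]

lemma hinv : (Astar F N)⁻¹ = DD F N := Matrix.inv_eq_right_inv (hAD F N)

lemma L_ent (y z : X F N) : L F N y z = if Covers F N z y then 1 else 0 := rfl

lemma R_ent (y z : X F N) : R F N y z = if Covers F N y z then 1 else 0 := rfl

lemma S1 : DD F N * (L F N * Astar F N) = (Fintype.card F : ℂ)⁻¹ • L F N := by
  ext y z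
  rw [DD, Astar, Matrix.diagonal_mul, Matrix.mul_diagonal, Matrix.smul_apply, L_ent]
  by_cases h : Covers F N z y
  · simp only [h, if_true, mul_one, one_mul, smul_eq_mul]
    have hd : ((dimS F N z : ℤ)) = (dimS F N y : ℤ) + 1 := by
      have := h.2; omega
    rw [hd, neg_add, zpow_add₀ (qne F), _root_.zpow_neg, _root_.zpow_neg, zpow_one]
    field_simp
  · rw [if_neg h]
    simp

lemma S2 : Astar F N * (DD F N * L F N) = L F N := by
  ext y z
  rw [Astar, DD, Matrix.diagonal_mul, Matrix.diagonal_mul, ← mul_assoc, ← zpow_add₀ (qne F)]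
  simp

lemma S3 : (Fintype.card F : ℂ) • (Astar F N * R F N) = R F N * Astar F N := by
  ext y z
  rw [Matrix.smul_apply, Astar, Matrix.diagonal_mul, Matrix.mul_diagonal, R_ent, smul_eq_mul]
  by_cases h : Covers F N y z
  · simp only [h, if_true, mul_one, one_mul]
    have hd : ((dimS F N y : ℤ)) = (dimS F N z : ℤ) + 1 := by
      have := h.2; omega
    rw [hd, neg_add, zpow_add₀ (qne F), _root_.zpow_neg, _root_.zpow_neg, zpow_one]
    field_simp
  · rw [if_neg h]
    simp

lemma S4 : L F N * DD F N = (Fintype.card F : ℂ) • (DD F N * L F N) := by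
  ext y z
  rw [Matrix.smul_apply, DD, Matrix.diagonal_mul, Matrix.mul_diagonal, L_ent, smul_eq_mul]
  by_cases h : Covers F N z y
  · simp only [h, if_true, mul_one, one_mul]
    have hd : ((dimS F N z : ℤ)) = (dimS F N y : ℤ) + 1 := by
      have := h.2; omega
    rw [hd, zpow_add₀ (qne F), zpow_one]
    ring
  · rw [if_neg h]
    simp

lemma S5 : DD F N * R F N = (Fintype.card F : ℂ) • (R F N * DD F N) := by
  ext y z
  rw [Matrix.smul_apply, DD, Matrix.diagonal_mul, Matrix.mul_diagonal, R_ent, smul_eq_mul]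
  by_cases h : Covers F N y z
  · simp only [h, if_true, mul_one, one_mul]
    have hd : ((dimS F N y : ℤ)) = (dimS F N z : ℤ) + 1 := by
      have := h.2; omega
    rw [hd, zpow_add₀ (qne F), zpow_one]
    ring
  · rw [if_neg h]
    simp

lemma natcard_filter (P : X F N → Prop) :
    Nat.card {w : X F N // P w} = (Finset.univ.filter P).card := by
  classical
  rw [Nat.card_eq_fintype_card, Fintype.card_subtype]

lemma S6 : DD F N * (L F N * R F N)
    = (Fintype.card F : ℂ) • (R F N * (DD F N * L F N))
      + (((Fintype.card F : ℂ) ^ N / ((Fintype.card F : ℂ) - 1)) • (1 : Matrix (X F N) (X F N) ℂ)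
        - ((Fintype.card F : ℂ) - 1)⁻¹ • (DD F N * DD F N)) := by
  classical
  have hq0 := qne F
  have hq1 := q1ne F
  have hDDapply : ∀ (M : Matrix (X F N) (X F N) ℂ) (y z : X F N),
      (DD F N * M) y z = (Fintype.card F : ℂ) ^ ((dimS F N y : ℤ)) * M y z := by
    intro M y z
    rw [DD, Matrix.diagonal_mul]
  ext y z
  have hLR : (L F N * R F N) y z
      = ((Finset.univ.filter fun w => Covers F N w y ∧ Covers F N w z).card : ℂ) := by
    rw [Matrix.mul_apply, ← Finset.sum_boole]
    refine Finset.sum_congr rfl fun w _ => ?_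
    rw [L_ent, R_ent]
    by_cases h1 : Covers F N w y <;> by_cases h2 : Covers F N w z <;> simp [h1, h2]
  have hRDL : (R F N * (DD F N * L F N)) y z
      = (Fintype.card F : ℂ) ^ ((dimS F N y : ℤ) - 1)
        * ((Finset.univ.filter fun w => Covers F N y w ∧ Covers F N z w).card : ℂ) := by
    rw [Matrix.mul_apply]
    have hterm : ∀ w : X F N, R F N y w * (DD F N * L F N) w z
        = if Covers F N y w ∧ Covers F N z w
            then (Fintype.card F : ℂ) ^ ((dimS F N y : ℤ) - 1) else 0 := by
      intro w
      rw [R_ent, hDDapply, L_ent]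
      by_cases h1 : Covers F N y w <;> by_cases h2 : Covers F N z w <;>
        simp only [h1, h2, and_true, and_false, true_and, false_and, if_true, if_false,
          one_mul, mul_one, mul_zero, zero_mul]
      congr 1
      have := h1.2
      omega
    rw [Finset.sum_congr rfl fun w _ => hterm w, ← Finset.sum_filter, Finset.sum_const,
      nsmul_eq_mul, mul_comm]
  have hz1 : (Fintype.card F : ℂ) * (Fintype.card F : ℂ) ^ ((dimS F N y : ℤ) - 1)
      = (Fintype.card F : ℂ) ^ (dimS F N y) := by
    rw [mul_comm, ← zpow_add_one₀ hq0, sub_add_cancel, zpow_natCast]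
  have hzk : (Fintype.card F : ℂ) ^ ((dimS F N y : ℤ)) = (Fintype.card F : ℂ) ^ (dimS F N y) :=
    zpow_natCast _ _
  by_cases hyz : y = z
  · subst hyz
    rw [hDDapply, Matrix.add_apply, Matrix.sub_apply, Matrix.smul_apply, Matrix.smul_apply,
      Matrix.smul_apply, hLR, hRDL, Matrix.one_apply_eq, hDDapply, DD, Matrix.diagonal_apply_eq]
    simp only [and_self, smul_eq_mul]
    set k := dimS F N y with hk
    have h2 : 2 ≤ Fintype.card F := Fintype.one_lt_card
    have hkN : k ≤ N := by
      have := Submodule.finrank_le (y : Submodule F (Fin N → F))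
      rw [Module.finrank_fin_fun] at this
      exact this
    have hA' : ((Finset.univ.filter fun w => Covers F N w y).card) * (Fintype.card F - 1)
        = Fintype.card F ^ (N - k) - 1 := by
      rw [← natcard_filter F N (fun w => Covers F N w y)]
      exact covers_above_card F N y
    have hB' : ((Finset.univ.filter fun w => Covers F N y w).card) * (Fintype.card F - 1)
        = Fintype.card F ^ k - 1 := by
      rw [← natcard_filter F N (fun w => Covers F N y w)]
      exact covers_below_card F N y
    have hAq : ((Finset.univ.filter fun w => Covers F N w y).card : ℂ)
        * ((Fintype.card F : ℂ) - 1) = (Fintype.card F : ℂ) ^ (N - k) - 1 := by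
      have hc := congrArg (Nat.cast : ℕ → ℂ) hA'
      rw [Nat.cast_mul, Nat.cast_sub (by omega : 1 ≤ Fintype.card F),
        Nat.cast_sub (Nat.one_le_pow _ _ (by omega)), Nat.cast_pow, Nat.cast_one] at hc
      exact hc
    have hBq : ((Finset.univ.filter fun w => Covers F N y w).card : ℂ)
        * ((Fintype.card F : ℂ) - 1) = (Fintype.card F : ℂ) ^ k - 1 := by
      have hc := congrArg (Nat.cast : ℕ → ℂ) hB'
      rw [Nat.cast_mul, Nat.cast_sub (by omega : 1 ≤ Fintype.card F),
        Nat.cast_sub (Nat.one_le_pow _ _ (by omega)), Nat.cast_pow, Nat.cast_one] at hc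
      exact hc
    have hcA : ((Finset.univ.filter fun w => Covers F N w y).card : ℂ)
        = ((Fintype.card F : ℂ) ^ (N - k) - 1) / ((Fintype.card F : ℂ) - 1) :=
      (eq_div_iff hq1).mpr hAq
    have hcB : ((Finset.univ.filter fun w => Covers F N y w).card : ℂ)
        = ((Fintype.card F : ℂ) ^ k - 1) / ((Fintype.card F : ℂ) - 1) :=
      (eq_div_iff hq1).mpr hBq
    have hsplit : (Fintype.card F : ℂ) ^ (N - k) * (Fintype.card F : ℂ) ^ k
        = (Fintype.card F : ℂ) ^ N := by
      rw [← pow_add]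
      congr 1
      omega
    rw [hcA, hcB, ← mul_assoc, hz1, hzk]
    field_simp
    linear_combination hsplit
  · rw [hDDapply, Matrix.add_apply, Matrix.sub_apply, Matrix.smul_apply, Matrix.smul_apply,
      Matrix.smul_apply, hLR, hRDL, Matrix.one_apply_ne hyz, hDDapply, DD,
      Matrix.diagonal_apply_ne _ hyz]
    have hcnt : (Finset.univ.filter fun w => Covers F N w y ∧ Covers F N w z).card
        = (Finset.univ.filter fun w => Covers F N y w ∧ Covers F N z w).card := by
      have h := covers_off_diag F N y z hyz
      rw [natcard_filter, natcard_filter] at h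
      convert h using 2 <;> congr 1 <;> exact Subsingleton.elim _ _
    rw [hcnt, smul_eq_mul, smul_eq_mul, smul_eq_mul, ← mul_assoc, hz1, hzk]
    ring

/-- With `A₊ = (A*)⁻¹/(q-1) + φ⁻¹ R` and `A₋ = (A*)⁻¹/(q-1) - φ (A*)⁻¹ L`, where `φ > 0`:
`q A₋ A* - A* A₋ = I`, `q A* A₊ - A₊ A* = I`, and `q A₊ A₋ - A₋ A₊ = (q^N/(q-1)) I`. -/
theorem stmt_7 (hN : 1 ≤ N) (φ : ℝ) (hφ : 0 < φ) :
    let q : ℂ := (Fintype.card F : ℂ)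
    let Ap : Matrix (X F N) (X F N) ℂ := (q - 1)⁻¹ • (Astar F N)⁻¹ + (φ : ℂ)⁻¹ • R F N
    let Am : Matrix (X F N) (X F N) ℂ :=
      (q - 1)⁻¹ • (Astar F N)⁻¹ - (φ : ℂ) • ((Astar F N)⁻¹ * L F N)
    q • (Am * Astar F N) - Astar F N * Am = 1 ∧
    q • (Astar F N * Ap) - Ap * Astar F N = 1 ∧
    q • (Ap * Am) - Am * Ap = (q ^ N / (q - 1)) • (1 : Matrix (X F N) (X F N) ℂ) := by
  intro q Ap Am
  have hq : q = (Fintype.card F : ℂ) := rfl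
  have hφ0 : (φ : ℂ) ≠ 0 := Complex.ofReal_ne_zero.mpr (ne_of_gt hφ)
  have hq0 := qne F
  have hq1 := q1ne F
  have hAp : Ap = (q - 1)⁻¹ • DD F N + (φ : ℂ)⁻¹ • R F N := by
    show (q - 1)⁻¹ • (Astar F N)⁻¹ + (φ : ℂ)⁻¹ • R F N = _
    rw [hinv]
  have hAm : Am = (q - 1)⁻¹ • DD F N - (φ : ℂ) • (DD F N * L F N) := by
    show (q - 1)⁻¹ • (Astar F N)⁻¹ - (φ : ℂ) • ((Astar F N)⁻¹ * L F N) = _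
    rw [hinv]
  refine ⟨?_, ?_, ?_⟩
  · rw [hAm, hq]
    have e1 : (((Fintype.card F : ℂ) - 1)⁻¹ • DD F N - (φ : ℂ) • (DD F N * L F N)) * Astar F N
        = ((Fintype.card F : ℂ) - 1)⁻¹ • (1 : Matrix (X F N) (X F N) ℂ)
          - (φ : ℂ) • ((Fintype.card F : ℂ)⁻¹ • L F N) := by
      rw [sub_mul, Matrix.smul_mul, Matrix.smul_mul, hDA, mul_assoc, S1]
    have e2 : Astar F N * (((Fintype.card F : ℂ) - 1)⁻¹ • DD F N - (φ : ℂ) • (DD F N * L F N))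
        = ((Fintype.card F : ℂ) - 1)⁻¹ • (1 : Matrix (X F N) (X F N) ℂ) - (φ : ℂ) • L F N := by
      rw [mul_sub, Matrix.mul_smul, Matrix.mul_smul, hAD, S2]
    rw [e1, e2]
    match_scalars <;> field_simp <;> ring
  · rw [hAp, hq]
    have e1 : Astar F N * (((Fintype.card F : ℂ) - 1)⁻¹ • DD F N + (φ : ℂ)⁻¹ • R F N)
        = ((Fintype.card F : ℂ) - 1)⁻¹ • (1 : Matrix (X F N) (X F N) ℂ)
          + (φ : ℂ)⁻¹ • (Astar F N * R F N) := by
      rw [mul_add, Matrix.mul_smul, Matrix.mul_smul, hAD]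
    have e2 : (((Fintype.card F : ℂ) - 1)⁻¹ • DD F N + (φ : ℂ)⁻¹ • R F N) * Astar F N
        = ((Fintype.card F : ℂ) - 1)⁻¹ • (1 : Matrix (X F N) (X F N) ℂ)
          + (φ : ℂ)⁻¹ • ((Fintype.card F : ℂ) • (Astar F N * R F N)) := by
      rw [add_mul, Matrix.smul_mul, Matrix.smul_mul, hDA, ← S3]
    rw [e1, e2]
    match_scalars <;> field_simp <;> ring
  · rw [hAp, hAm, hq]
    simp only [add_mul, sub_mul, mul_add, mul_sub, Matrix.smul_mul, Matrix.mul_smul,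
      smul_sub, smul_add, smul_smul, mul_assoc]
    rw [S4, S5, S6]
    simp only [Matrix.mul_smul, smul_sub, smul_add, smul_smul]
    match_scalars <;> field_simp <;> ring

end
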